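/- Let G be a simple bipartite graph with a unique perfect matching M and adjacency matrix A. Then det(A) = (−1)^{|M|}; in particular A is invertible over ℤ up to sign, i.e., |det(A)| = 1. -/

import Mathlib

open scoped Classical

/-- Degree of a vertex in a simple graph (as a cardinality, avoiding decidability). -/
noncomputable def sachsDeg {n : ℕ} (H : SimpleGraph (Fin n)) (v : Fin n) : ℕ :=
  Nat.card {w // H.Adj v w}

/-- `M` is a perfect matching of `G`, viewed as a spanning subgraph of `K₂` components. -/
def IsPerfectMatchingSub {n : ℕ} (G M : SimpleGraph (Fin n)) : Prop :=
  M ≤ G ∧ ∀ v, sachsDeg M v = 1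

/-- From any permutation `g` with `G.Adj v (g v)` for all `v`, and a proper 2-coloring,
we can build a perfect matching of `G` that matches each `true` vertex `v` to `g v`. -/
lemma sachs_matching_aux {n : ℕ} (G : SimpleGraph (Fin n)) (c : Fin n → Bool)
    (hc : ∀ i j, G.Adj i j → c i ≠ c j) (g : Equiv.Perm (Fin n))
    (hg : ∀ v, G.Adj v (g v)) :
    ∃ M' : SimpleGraph (Fin n), IsPerfectMatchingSub G M' ∧
      ∀ v, c v = true → M'.Adj v (g v) := by
  refine ⟨⟨fun v w => (c v = true ∧ w = g v) ∨ (c w = true ∧ v = g w), ?_, ?_⟩, ⟨?_, ?_⟩, ?_⟩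
  · refine ⟨fun v w h => ?_⟩
    exact h.elim (fun h => Or.inr h) (fun h => Or.inl h)
  · refine ⟨fun v h => ?_⟩
    rcases h with ⟨hv, he⟩ | ⟨hv, he⟩ <;>
      · have h2 := hg v
        rw [← he] at h2
        exact G.loopless.irrefl v h2
  · intro v w h
    rcases h with ⟨hv, he⟩ | ⟨hw, he⟩
    · exact he ▸ hg v
    · exact (he ▸ hg w).symm
  · intro v
    rw [sachsDeg, Nat.card_eq_one_iff_exists]
    by_cases hv : c v = true
    · refine ⟨⟨g v, Or.inl ⟨hv, rfl⟩⟩, ?_⟩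
      rintro ⟨y, hy⟩
      rcases hy with ⟨_, he⟩ | ⟨hy2, he⟩
      · exact Subtype.ext he
      · exact absurd (he ▸ hv) (hc y (g y) (hg y) (hy2.trans (he ▸ hv).symm) ).elim
    · have hgv : c (g⁻¹ v) = true := by
        have h1 : c (g⁻¹ v) ≠ c (g (g⁻¹ v)) := hc _ _ (hg (g⁻¹ v))
        rw [show g (g⁻¹ v) = v from g.apply_symm_apply v] at h1
        cases h : c (g⁻¹ v)
        · cases h2 : c v
          · exact absurd (h.trans h2.symm) h1
          · exact absurd h2 hv
        · rfl
      refine ⟨⟨g⁻¹ v, Or.inr ⟨hgv, (g.apply_symm_apply v).symm⟩⟩, ?_⟩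
      rintro ⟨y, hy⟩
      rcases hy with ⟨hv', _⟩ | ⟨_, he⟩
      · exact absurd hv' hv
      · refine Subtype.ext ?_
        show y = g⁻¹ v
        rw [he, show g⁻¹ (g y) = y from g.symm_apply_apply y]
  · intro v hv
    exact Or.inl ⟨hv, rfl⟩

/-- If `G` is a simple bipartite graph on `2m` vertices with a unique
perfect matching, then its (0,1) adjacency matrix `A` satisfies `det A = (−1)^m`;
in particular `|det A| = 1`. -/
theorem det_of_bipartite_with_unique_perfect_matching
    {m : ℕ} (G : SimpleGraph (Fin (2 * m)))
    (c : Fin (2 * m) → Bool) (hc : ∀ i j, G.Adj i j → c i ≠ c j)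
    (M : SimpleGraph (Fin (2 * m))) (hM : IsPerfectMatchingSub G M)
    (huniq : ∀ M' : SimpleGraph (Fin (2 * m)), IsPerfectMatchingSub G M' → M' = M)
    (A : Matrix (Fin (2 * m)) (Fin (2 * m)) ℝ)
    (hAdef : A = Matrix.of fun i j => if G.Adj i j then (1 : ℝ) else 0) :
    A.det = (-1) ^ m ∧ |A.det| = 1 := by
  classical
  obtain ⟨hMG, hdeg⟩ := hM
  -- extract the matching function f
  have hex : ∀ v, ∃ w, M.Adj v w ∧ ∀ u, M.Adj v u → u = w := by
    intro v
    have h1 := hdeg v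
    rw [sachsDeg, Nat.card_eq_one_iff_exists] at h1
    obtain ⟨⟨w, hw⟩, hu⟩ := h1
    exact ⟨w, hw, fun u hu' => congrArg Subtype.val (hu ⟨u, hu'⟩)⟩
  set f : Fin (2 * m) → Fin (2 * m) := fun v => (hex v).choose with hf
  have hfadj : ∀ v, M.Adj v (f v) := fun v => (hex v).choose_spec.1
  have hfuniq : ∀ v u, M.Adj v u → u = f v := fun v => (hex v).choose_spec.2
  have hfinv : Function.Involutive f := by
    intro v
    exact (hfuniq (f v) v (hfadj v).symm).symm
  set fp : Equiv.Perm (Fin (2 * m)) := hfinv.toPerm f with hfp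
  have hfpapp : ∀ v, fp v = f v := fun _ => rfl
  -- any permutation contributing to det equals fp
  have hkey : ∀ σ : Equiv.Perm (Fin (2 * m)), (∀ i, G.Adj (σ i) i) → σ = fp := by
    intro σ hσ
    have hσ' : ∀ v, G.Adj v (σ v) := fun v => (hσ v).symm
    obtain ⟨M1, hM1, hM1adj⟩ := sachs_matching_aux G c hc σ hσ'
    obtain ⟨M2, hM2, hM2adj⟩ := sachs_matching_aux G c hc σ⁻¹ (by
      intro v
      have := hσ (σ⁻¹ v)
      rwa [show σ (σ⁻¹ v) = v from σ.apply_symm_apply v] at this)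
    rw [huniq M1 hM1] at hM1adj
    rw [huniq M2 hM2] at hM2adj
    ext v : 1
    show σ v = f v
    cases h : c v with
    | true => exact hfuniq v (σ v) (hM1adj v h)
    | false =>
      have hcv : c (σ v) = true := by
        have h1 : c (σ v) ≠ c v := hc _ _ (hσ v)
        cases h2 : c (σ v)
        · exact absurd (h2.trans h.symm) h1
        · rfl
      have h3 : M.Adj (σ v) (σ⁻¹ (σ v)) := hM2adj (σ v) hcv
      rw [show σ⁻¹ (σ v) = v from σ.symm_apply_apply v] at h3
      have h4 : v = f (σ v) := hfuniq (σ v) v h3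
      have := congrArg f h4
      rw [hfinv (σ v)] at this
      exact this.symm
  -- adjacency for fp entries
  have hfpG : ∀ i, G.Adj (fp i) i := fun i => (hMG (hfadj i)).symm
  -- the determinant
  have hdet : A.det = ((Equiv.Perm.sign fp : ℤ) : ℝ) := by
    rw [Matrix.det_apply]
    rw [Finset.sum_eq_single fp]
    · have : ∀ i, A (fp i) i = 1 := by
        intro i
        rw [hAdef]
        simp [hfpG i]
      rw [Finset.prod_congr rfl (fun i _ => this i), Finset.prod_const_one]
      simp [Units.smul_def]
    · intro σ _ hne
      have : ¬ (∀ i, G.Adj (σ i) i) := fun h => hne (hkey σ h)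
      push_neg at this
      obtain ⟨i, hi⟩ := this
      have hz0 : A (σ i) i = 0 := by rw [hAdef]; simp [hi]
      have hz : (∏ j : Fin (2 * m), A (σ j) j) = 0 :=
        Finset.prod_eq_zero (Finset.mem_univ i) hz0
      rw [hz]
      simp
    · intro h
      exact absurd (Finset.mem_univ fp) h
  -- sign of fp is (-1)^m
  have hfix : ∀ v, fp v ≠ v := by
    intro v h
    have h2 := hfadj v
    rw [← hfpapp v, h] at h2
    exact M.loopless.irrefl v h2
  have hsupp : fp.support = Finset.univ := by
    ext v
    simp [Equiv.Perm.mem_support, hfix v]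
  have hsq : fp ^ 2 = 1 := by
    ext v
    simp [pow_succ, hfpapp, hfinv v]
  have htwo : ∀ n ∈ fp.cycleType, n = 2 := by
    intro n hn
    have h1 : n ∣ 2 :=
      (Equiv.Perm.dvd_of_mem_cycleType hn).trans (orderOf_dvd_of_pow_eq_one hsq)
    have h2 : 2 ≤ n := Equiv.Perm.two_le_of_mem_cycleType hn
    exact le_antisymm (Nat.le_of_dvd two_pos h1) h2
  have hrep : fp.cycleType = Multiset.replicate (Multiset.card fp.cycleType) 2 :=
    Multiset.eq_replicate_of_mem htwo
  have hsum : fp.cycleType.sum = 2 * m := by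
    rw [Equiv.Perm.sum_cycleType, hsupp]
    simp
  have hcard : Multiset.card fp.cycleType = m := by
    have := hsum
    rw [hrep, Multiset.sum_replicate, smul_eq_mul] at this
    omega
  have hsign : Equiv.Perm.sign fp = (-1 : ℤˣ) ^ m := by
    rw [Equiv.Perm.sign_of_cycleType, hsum, hcard, pow_add, pow_mul]
    simp
  constructor
  · rw [hdet, hsign]
    push_cast
    ring
  · rw [hdet, hsign]
    simp [abs_pow]
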